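/- Let a_1 < ... < a_n be integers and let Ω₀ be the set of upper triangular integer matrices with diagonal (a_1, ..., a_n) and (i,j)-entry c_{ij} satisfying 0 ≤ c_{ij} < a_j − a_i for i < j. If A, B ∈ Ω₀ and P is a unipotent upper triangular matrix in GL_n(ℤ) with P A P⁻¹ = B, then P = I_n and A = B. -/

import Mathlib

/-- No two distinct matrices in `Ω₀` (upper triangular, diagonal `a 1 < ⋯ < a n`,
entries `0 ≤ c i j < a j - a i` above the diagonal) are conjugate under a unipotent
upper triangular matrix: if `P A P⁻¹ = B` with `P` unipotent, then `P = 1` and `A = B`. -/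
theorem stmt_5 (n : ℕ) (a : Fin n → ℤ) (ha : StrictMono a)
    (A B : Matrix (Fin n) (Fin n) ℤ)
    (hA : A.BlockTriangular id) (hAd : ∀ i, A i i = a i)
    (hA0 : ∀ i j : Fin n, i < j → 0 ≤ A i j ∧ A i j < a j - a i)
    (hB : B.BlockTriangular id) (hBd : ∀ i, B i i = a i)
    (hB0 : ∀ i j : Fin n, i < j → 0 ≤ B i j ∧ B i j < a j - a i)
    (P : Matrix.GeneralLinearGroup (Fin n) ℤ)
    (hPu : (P : Matrix (Fin n) (Fin n) ℤ).BlockTriangular id)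
    (hPd : ∀ i, (P : Matrix (Fin n) (Fin n) ℤ) i i = 1)
    (hP : (P : Matrix (Fin n) (Fin n) ℤ) * A *
        ((P⁻¹ : Matrix.GeneralLinearGroup (Fin n) ℤ) : Matrix (Fin n) (Fin n) ℤ) = B) :
    P = 1 ∧ A = B := by
  set M : Matrix (Fin n) (Fin n) ℤ := (P : Matrix (Fin n) (Fin n) ℤ) with hM
  have hinv : ((P⁻¹ : Matrix.GeneralLinearGroup (Fin n) ℤ) : Matrix (Fin n) (Fin n) ℤ) * M = 1 :=
    Units.inv_mul P
  have hPA : M * A = B * M := by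
    have := congrArg (· * M) hP
    beta_reduce at this
    rw [Matrix.mul_assoc, hinv, Matrix.mul_one] at this
    exact this
  -- key induction
  have key : ∀ d : ℕ, ∀ i j : Fin n, i < j → (j : ℕ) - (i : ℕ) ≤ d →
      M i j = 0 ∧ A i j = B i j := by
    intro d
    induction d with
    | zero => intro i j hij hle; omega
    | succ d ih =>
      intro i j hij hle
      by_cases hd : (j : ℕ) - (i : ℕ) ≤ d
      · exact ih i j hij hd
      have hji : (j : ℕ) - (i : ℕ) = d + 1 := by omega
      have hentry : ∑ k, M i k * A k j = ∑ k, B i k * M k j := by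
        have := congrFun (congrFun hPA i) j
        simpa [Matrix.mul_apply] using this
      have hij' : i ≠ j := ne_of_lt hij
      have hmemij : (i : Fin n) ∈ ({i, j} : Finset (Fin n)) := by simp
      have hL : ∑ k, M i k * A k j = A i j + M i j * a j := by
        rw [← Finset.sum_subset (Finset.subset_univ ({i, j} : Finset (Fin n)))]
        · rw [Finset.sum_pair hij', hPd, hAd]; ring
        · intro k _ hk
          simp only [Finset.mem_insert, Finset.mem_singleton, not_or] at hk
          obtain ⟨hki, hkj⟩ := hk
          rcases lt_trichotomy k i with h | h | h
          · rw [hPu (show id k < id i from h)]; ring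
          · exact absurd h hki
          · rcases lt_trichotomy k j with h' | h' | h'
            · have : M i k = 0 := (ih i k h (by omega)).1
              rw [this]; ring
            · exact absurd h' hkj
            · rw [hA (show id j < id k from h')]; ring
      have hR : ∑ k, B i k * M k j = a i * M i j + B i j := by
        rw [← Finset.sum_subset (Finset.subset_univ ({i, j} : Finset (Fin n)))]
        · rw [Finset.sum_pair hij', hPd, hBd]; ring
        · intro k _ hk
          simp only [Finset.mem_insert, Finset.mem_singleton, not_or] at hk
          obtain ⟨hki, hkj⟩ := hk
          rcases lt_trichotomy k i with h | h | h
          · rw [hB (show id k < id i from h)]; ring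
          · exact absurd h hki
          · rcases lt_trichotomy k j with h' | h' | h'
            · have : M k j = 0 := (ih k j h' (by omega)).1
              rw [this]; ring
            · exact absurd h' hkj
            · rw [hPu (show id j < id k from h')]; ring
      rw [hL, hR] at hentry
      have hD : 0 < a j - a i := by have := ha hij; linarith
      have heq : M i j * (a j - a i) = B i j - A i j := by linarith
      obtain ⟨hA0', hA1'⟩ := hA0 i j hij
      obtain ⟨hB0', hB1'⟩ := hB0 i j hij
      have hM0 : M i j = 0 := by
        rcases lt_trichotomy (M i j) 0 with h | h | h
        · have h1 : M i j ≤ -1 := by omega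
          have := mul_le_mul_of_nonneg_right h1 hD.le
          linarith
        · exact h
        · have h1 : (1 : ℤ) ≤ M i j := by omega
          have := mul_le_mul_of_nonneg_right h1 hD.le
          linarith
      refine ⟨hM0, ?_⟩
      rw [hM0] at heq
      linarith
  constructor
  · have hM1 : M = 1 := by
      ext i j
      rcases lt_trichotomy i j with h | h | h
      · rw [(key n i j h (by omega)).1, Matrix.one_apply_ne (ne_of_lt h)]
      · subst h
        rw [hPd i, Matrix.one_apply_eq]
      · rw [hPu (show id j < id i from h), Matrix.one_apply_ne (ne_of_gt h)]
    exact Units.ext hM1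
  · ext i j
    rcases lt_trichotomy i j with h | h | h
    · exact (key n i j h (by omega)).2
    · subst h; rw [hAd, hBd]
    · rw [hA (show id j < id i from h), hB (show id j < id i from h)]
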